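/- Let G and T be simple graphs, with G connected and T acyclic (T contains no cycle). Let f : G → T be a graph homomorphism that is locally injective, i.e. for every vertex v of G the restriction of f to the neighbor set of v is injective. Then f is injective on vertices and G is acyclic (hence G is a tree). -/

import Mathlib

open SimpleGraph

private lemma aux_map_isPath {V W : Type*} {G : SimpleGraph V} {T : SimpleGraph W}
    (hT : T.IsAcyclic) (f : G →g T)
    (hloc : ∀ v : V, Set.InjOn f (G.neighborSet v)) :
    ∀ {u v : V} (p : G.Walk u v), p.IsPath → (p.map f).IsPath := by
  classical
  intro u v p
  induction p with
  | nil => intro _; simp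
  | @cons u x v h q IH =>
    intro hp
    rw [SimpleGraph.Walk.cons_isPath_iff] at hp
    have hqm : (q.map f).IsPath := IH hp.1
    rw [SimpleGraph.Walk.map_cons, SimpleGraph.Walk.cons_isPath_iff]
    refine ⟨hqm, ?_⟩
    intro hmem
    have hnodup := hqm.support_nodup
    rw [SimpleGraph.Walk.support_map] at hnodup
    have hinj := List.inj_on_of_nodup_map hnodup
    have hnotedge : s(f u, f x) ∉ ((q.map f).takeUntil (f u) hmem).edges := by
      intro hεm
      have hε := SimpleGraph.Walk.edges_takeUntil_subset _ hmem hεm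
      rw [SimpleGraph.Walk.edges_map, List.mem_map] at hε
      obtain ⟨e, he, hfe⟩ := hε
      revert hfe
      induction e using Sym2.ind with
      | _ c d =>
        intro hfe
        rw [Sym2.map_pair_eq, Sym2.eq_iff] at hfe
        have hc := SimpleGraph.Walk.fst_mem_support_of_mem_edges q he
        have hd := SimpleGraph.Walk.snd_mem_support_of_mem_edges q he
        have hadjcd : G.Adj c d := q.adj_of_mem_edges he
        rcases hfe with ⟨h1, h2⟩ | ⟨h1, h2⟩
        · -- f c = f u, f d = f x
          have hdx : d = x := hinj hd q.start_mem_support h2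
          have hcu : c = u := hloc x (hdx ▸ hadjcd.symm) h.symm h1
          exact hp.2 (hcu ▸ hc)
        · -- f c = f x, f d = f u
          have hcx : c = x := hinj hc q.start_mem_support h1
          have hdu : d = u := hloc x (hcx ▸ hadjcd) h.symm h2
          exact hp.2 (hdu ▸ hd)
    exact hT _ ((SimpleGraph.Walk.cons_isCycle_iff _ (f.map_adj h)).mpr
      ⟨hqm.takeUntil hmem, hnotedge⟩)

/-- A locally injective graph homomorphism from a connected graph to an acyclic graph
is injective, and the source graph is itself acyclic (hence a tree). -/
theorem locally_injective_hom_to_tree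
    {V W : Type*} {G : SimpleGraph V} {T : SimpleGraph W}
    (hG : G.Connected) (hT : T.IsAcyclic)
    (f : G →g T)
    (hloc : ∀ v : V, Set.InjOn f (G.neighborSet v)) :
    Function.Injective f ∧ G.IsAcyclic := by
  classical
  have key : ∀ {u v : V} (p : G.Walk u v), p.IsPath → (p.map f).IsPath :=
    fun p hp => aux_map_isPath hT f hloc p hp
  constructor
  · intro a b hab
    obtain ⟨w⟩ := hG.preconnected a b
    have hp : w.bypass.IsPath := w.bypass_isPath
    have hm : (w.bypass.map f).IsPath := key w.bypass hp
    have hm' : ((w.bypass.map f).copy rfl hab.symm).IsPath := by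
      rwa [SimpleGraph.Walk.isPath_copy]
    have hnil := (SimpleGraph.Walk.isPath_iff_eq_nil).mp hm'
    have hlen : w.bypass.length = 0 := by
      have := congrArg SimpleGraph.Walk.length hnil
      simpa using this
    exact SimpleGraph.Walk.eq_of_length_eq_zero hlen
  · intro v c hc
    cases c with
    | nil => exact hc.ne_nil rfl
    | @cons _ x _ h q =>
      rw [SimpleGraph.Walk.cons_isCycle_iff] at hc
      obtain ⟨hq, hne⟩ := hc
      have hqm : (q.map f).IsPath := key q hq
      have hnodup := hqm.support_nodup
      rw [SimpleGraph.Walk.support_map] at hnodup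
      have hinj := List.inj_on_of_nodup_map hnodup
      refine hT _ ((SimpleGraph.Walk.cons_isCycle_iff _ (f.map_adj h)).mpr ⟨hqm, ?_⟩)
      rw [SimpleGraph.Walk.edges_map, List.mem_map]
      rintro ⟨e, he, hfe⟩
      revert hfe
      induction e using Sym2.ind with
      | _ c d =>
        intro hfe
        rw [Sym2.map_pair_eq, Sym2.eq_iff] at hfe
        have hc' := SimpleGraph.Walk.fst_mem_support_of_mem_edges q he
        have hd' := SimpleGraph.Walk.snd_mem_support_of_mem_edges q he
        have hadjcd : G.Adj c d := q.adj_of_mem_edges he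
        rcases hfe with ⟨h1, h2⟩ | ⟨h1, h2⟩
        · -- f c = f v, f d = f x
          have hcv : c = v := hinj hc' q.end_mem_support h1
          have hdx : d = x := hloc v (hcv ▸ hadjcd) h h2
          rw [hcv, hdx] at he
          exact hne he
        · -- f c = f x, f d = f v
          have hcx : c = x := hinj hc' q.start_mem_support h1
          have hdv : d = v := hinj hd' q.end_mem_support h2
          rw [hcx, hdv, Sym2.eq_swap] at he
          exact hne he
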